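/- Fix m ≤ K and a set {a_1,...,a_m} of m distinct actions in [K]. Given any (not necessarily distinct) actions A_1,...,A_m ∈ [K] with A_i ≥ m - i + 1 for all i, define recursively: Ã_k = A_k if A_k ∈ {a_1,...,a_m} and A_k ∉ {Ã_1,...,Ã_{k-1}}; otherwise Ã_k = a_j for the smallest j such that a_j ∉ {Ã_1,...,Ã_{k-1}} and a_j ≥ m - k + 1. Then for every k ≤ m: (a) Ã_k is well-defined and Ã_k ∈ {a_1,...,a_m}; (b) Ã_k ≥ m - k + 1; (c) Ã_k ∉ {Ã_1,...,Ã_{k-1}}; (d) Ã_k ∉ {A_1,...,A_{k-1}}. -/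

import Mathlib

open Classical in
/-- the available actions of sufficient rank at step `k`, given the list `prev`
of previously assigned values. -/
noncomputable def Tset (m : ℕ) (a : Fin m → ℕ) (k : ℕ) (prev : List ℕ) : Finset (Fin m) :=
  Finset.univ.filter fun j : Fin m => a j ∉ prev ∧ m - k ≤ a j

open Classical in
/-- one step of the recursion: the value assigned to player `k`, given the list
`prev` of previously assigned values. -/
noncomputable def stp (m : ℕ) (a A : Fin m → ℕ) (k : ℕ) (prev : List ℕ) : ℕ :=
  if h : k < m then
    if A ⟨k, h⟩ ∈ Set.range a ∧ A ⟨k, h⟩ ∉ prev then A ⟨k, h⟩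
    else
      if hT : (Tset m a k prev).Nonempty then a ((Tset m a k prev).min' hT) else 0
  else 0

noncomputable def preva (m : ℕ) (a A : Fin m → ℕ) : ℕ → List ℕ
  | 0 => []
  | n + 1 => preva m a A n ++ [stp m a A n (preva m a A n)]

noncomputable def Atl (m : ℕ) (a A : Fin m → ℕ) (k : Fin m) : ℕ :=
  stp m a A (k : ℕ) (preva m a A (k : ℕ))

lemma mem_Tset (m : ℕ) (a : Fin m → ℕ) (k : ℕ) (prev : List ℕ) (j : Fin m) :
    j ∈ Tset m a k prev ↔ a j ∉ prev ∧ m - k ≤ a j := by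
  simp [Tset]

lemma mem_preva (m : ℕ) (a A : Fin m → ℕ) {n : ℕ} (hn : n ≤ m) {x : ℕ} :
    x ∈ preva m a A n ↔ ∃ i : Fin m, (i : ℕ) < n ∧ Atl m a A i = x := by
  induction n with
  | zero => simp [preva]
  | succ n ih =>
    have hn' : n ≤ m := Nat.le_of_succ_le hn
    have hnm : n < m := hn
    have hstp : stp m a A n (preva m a A n) = Atl m a A ⟨n, hnm⟩ := rfl
    simp only [preva, List.mem_append, List.mem_singleton, ih hn']
    constructor
    · rintro (⟨i, hi, he⟩ | he)
      · exact ⟨i, Nat.lt_succ_of_lt hi, he⟩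
      · exact ⟨⟨n, hnm⟩, Nat.lt_succ_self n, (he.trans hstp).symm⟩
    · rintro ⟨i, hi, he⟩
      rcases Nat.lt_succ_iff_lt_or_eq.1 hi with h | h
      · exact Or.inl ⟨i, h, he⟩
      · refine Or.inr ?_
        have hie : i = ⟨n, hnm⟩ := Fin.ext h
        rw [hie] at he
        exact he.symm.trans hstp.symm

lemma notin_iff (m : ℕ) (a A : Fin m → ℕ) (k : Fin m) (x : ℕ) :
    x ∉ preva m a A (k : ℕ) ↔ ∀ i : Fin m, i < k → Atl m a A i ≠ x := by
  constructor
  · intro h i hik he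
    exact h ((mem_preva m a A (le_of_lt k.isLt)).2 ⟨i, hik, he⟩)
  · intro h hmem
    obtain ⟨i, hik, he⟩ := (mem_preva m a A (le_of_lt k.isLt)).1 hmem
    exact h i hik he

lemma Atl_eq_pos (m : ℕ) (a A : Fin m → ℕ) (k : Fin m)
    (h1 : A k ∈ Set.range a) (h2 : ∀ i, i < k → Atl m a A i ≠ A k) :
    Atl m a A k = A k := by
  have h2' : A k ∉ preva m a A (k : ℕ) := (notin_iff m a A k _).2 h2
  unfold Atl stp
  rw [dif_pos k.isLt, if_pos ⟨h1, h2'⟩]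

lemma Atl_eq_neg (m : ℕ) (a A : Fin m → ℕ) (k : Fin m)
    (hC : ¬ (A k ∈ Set.range a ∧ ∀ i, i < k → Atl m a A i ≠ A k))
    (hT : (Tset m a (k : ℕ) (preva m a A (k : ℕ))).Nonempty) :
    Atl m a A k = a ((Tset m a (k : ℕ) (preva m a A (k : ℕ))).min' hT) := by
  unfold Atl stp
  rw [dif_pos k.isLt, if_neg, dif_pos hT]
  rintro ⟨hr, hnp⟩
  exact hC ⟨hr, (notin_iff m a A k _).1 hnp⟩

lemma Tset_nonempty (m : ℕ) (a A : Fin m → ℕ) (ha_inj : Function.Injective a)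
    (ha1 : ∀ j, 1 ≤ a j) (k : Fin m) :
    (Tset m a (k : ℕ) (preva m a A (k : ℕ))).Nonempty := by
  classical
  have hsum : (Finset.univ.filter fun j : Fin m => a j ∉ preva m a A (k:ℕ)).card
      + (Finset.univ.filter fun j : Fin m => ¬ a j ∉ preva m a A (k:ℕ)).card = m := by
    rw [Finset.card_filter_add_card_filter_not]
    simp
  have hUc : (Finset.univ.filter fun j : Fin m => ¬ a j ∉ preva m a A (k:ℕ)).card
      ≤ (Finset.range (k:ℕ)).card := by
    apply Finset.card_le_card_of_injOn
      (fun j => if h : ∃ i : Fin m, i < k ∧ Atl m a A i = a j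
        then ((Classical.choose h : Fin m) : ℕ) else 0)
    · intro j hj
      simp only [Finset.mem_coe, Finset.mem_filter, not_not] at hj
      obtain ⟨i, hik, hie⟩ := (mem_preva m a A (le_of_lt k.isLt)).1 hj.2
      have hex : ∃ i : Fin m, i < k ∧ Atl m a A i = a j := ⟨i, hik, hie⟩
      simp only [dif_pos hex]
      exact Finset.mem_range.mpr (Classical.choose_spec hex).1
    · intro j1 h1 j2 h2 he
      simp only [Finset.mem_coe, Finset.mem_filter, not_not] at h1 h2
      obtain ⟨i1, hik1, hie1⟩ := (mem_preva m a A (le_of_lt k.isLt)).1 h1.2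
      obtain ⟨i2, hik2, hie2⟩ := (mem_preva m a A (le_of_lt k.isLt)).1 h2.2
      have hex1 : ∃ i : Fin m, i < k ∧ Atl m a A i = a j1 := ⟨i1, hik1, hie1⟩
      have hex2 : ∃ i : Fin m, i < k ∧ Atl m a A i = a j2 := ⟨i2, hik2, hie2⟩
      simp only [dif_pos hex1, dif_pos hex2] at he
      have hch : (Classical.choose hex1) = (Classical.choose hex2) := Fin.ext he
      apply ha_inj
      rw [← (Classical.choose_spec hex1).2, ← (Classical.choose_spec hex2).2, hch]
  rw [Finset.card_range] at hUc
  have hUcard : m - (k:ℕ) ≤ (Finset.univ.filter fun j : Fin m => a j ∉ preva m a A (k:ℕ)).card := by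
    omega
  by_contra hne
  rw [Finset.not_nonempty_iff_eq_empty] at hne
  have hlt : ∀ j ∈ (Finset.univ.filter fun j : Fin m => a j ∉ preva m a A (k:ℕ)),
      a j ≤ m - (k:ℕ) - 1 := by
    intro j hj
    by_contra hcon
    push_neg at hcon
    have hjT : j ∈ Tset m a (k:ℕ) (preva m a A (k:ℕ)) := by
      rw [mem_Tset]
      exact ⟨(Finset.mem_filter.1 hj).2, by omega⟩
    rw [hne] at hjT
    exact absurd hjT (Finset.notMem_empty j)
  have hcard2 : (Finset.univ.filter fun j : Fin m => a j ∉ preva m a A (k:ℕ)).card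
      ≤ (Finset.Icc 1 (m - (k:ℕ) - 1)).card :=
    Finset.card_le_card_of_injOn a
      (fun j hj => Finset.mem_Icc.2 ⟨ha1 j, hlt j hj⟩)
      (fun x _ y _ h => ha_inj h)
  rw [Nat.card_Icc] at hcard2
  have := k.isLt
  omega

lemma Atl_main (m : ℕ) (a A : Fin m → ℕ) (ha_inj : Function.Injective a)
    (ha1 : ∀ j, 1 ≤ a j) (hA_lb : ∀ i : Fin m, m - (i : ℕ) ≤ A i) (k : Fin m) :
    Atl m a A k ∈ Set.range a ∧ m - (k : ℕ) ≤ Atl m a A k ∧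
      (∀ i, i < k → Atl m a A i ≠ Atl m a A k) ∧
      (∀ i, i < k → A i ≠ Atl m a A k) := by
  obtain ⟨ha', hb', hc'⟩ : Atl m a A k ∈ Set.range a ∧ m - (k : ℕ) ≤ Atl m a A k ∧
      (∀ i, i < k → Atl m a A i ≠ Atl m a A k) := by
    by_cases hC : A k ∈ Set.range a ∧ ∀ i, i < k → Atl m a A i ≠ A k
    · have he := Atl_eq_pos m a A k hC.1 hC.2
      exact ⟨he ▸ hC.1, he ▸ hA_lb k, fun i hi => he ▸ hC.2 i hi⟩
    · have hT := Tset_nonempty m a A ha_inj ha1 k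
      have he := Atl_eq_neg m a A k hC hT
      have hjmem := (mem_Tset m a _ _ _).1 (Finset.min'_mem _ hT)
      refine ⟨⟨_, he.symm⟩, he ▸ hjmem.2, ?_⟩
      intro i hi
      rw [he]
      exact (notin_iff m a A k _).1 hjmem.1 i hi
  refine ⟨ha', hb', hc', ?_⟩
  intro i hi
  by_cases hCi : A i ∈ Set.range a ∧ ∀ i', i' < i → Atl m a A i' ≠ A i
  · have he := Atl_eq_pos m a A i hCi.1 hCi.2
    exact he ▸ hc' i hi
  · by_cases hr : A i ∈ Set.range a
    · push_neg at hCi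
      obtain ⟨i', hi', he⟩ := hCi hr
      exact he ▸ hc' i' (hi'.trans hi)
    · intro hh
      exact hr (hh ▸ ha')

/-- The recursive assignment `Atil` of a distinct top-`m` action to each player is
well defined and satisfies properties (a)–(d): there exists `Atil` following the
recursion (take `A_k` when possible, otherwise the available `a_j` of smallest
index `j` with `a_j ≥ m - k + 1`), and for every `k`: `Atil k ∈ {a_1,…,a_m}`,
`Atil k ≥ m - k + 1` (zero-indexed: `m - k`), `Atil k` differs from all previous
`Atil i`, and `Atil k` differs from all previous `A i`. Actions are labeled
`1,…,K` as natural numbers. -/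
theorem stmt7 (K m : ℕ) (hm : m ≤ K) (a : Fin m → ℕ)
    (ha_inj : Function.Injective a) (ha_mem : ∀ j, a j ∈ Finset.Icc 1 K)
    (A : Fin m → ℕ) (hA_mem : ∀ i, A i ∈ Finset.Icc 1 K)
    (hA_lb : ∀ i : Fin m, m - (i : ℕ) ≤ A i) :
    ∃ Atil : Fin m → ℕ,
      (∀ k : Fin m,
        ((A k ∈ Set.range a ∧ ∀ i, i < k → Atil i ≠ A k) → Atil k = A k) ∧
        (¬(A k ∈ Set.range a ∧ ∀ i, i < k → Atil i ≠ A k) →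
          ∃ j : Fin m, Atil k = a j ∧ (∀ i, i < k → Atil i ≠ a j) ∧
            m - (k : ℕ) ≤ a j ∧
            ∀ j' : Fin m,
              ((∀ i, i < k → Atil i ≠ a j') ∧ m - (k : ℕ) ≤ a j') → j ≤ j')) ∧
      (∀ k, Atil k ∈ Set.range a) ∧
      (∀ k : Fin m, m - (k : ℕ) ≤ Atil k) ∧
      (∀ k i : Fin m, i < k → Atil i ≠ Atil k) ∧
      (∀ k i : Fin m, i < k → A i ≠ Atil k) := by
  have ha1 : ∀ j, 1 ≤ a j := fun j => (Finset.mem_Icc.1 (ha_mem j)).1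
  refine ⟨Atl m a A, ?_, fun k => (Atl_main m a A ha_inj ha1 hA_lb k).1,
    fun k => (Atl_main m a A ha_inj ha1 hA_lb k).2.1,
    fun k i hi => (Atl_main m a A ha_inj ha1 hA_lb k).2.2.1 i hi,
    fun k i hi => (Atl_main m a A ha_inj ha1 hA_lb k).2.2.2 i hi⟩
  intro k
  constructor
  · intro ⟨h1, h2⟩
    exact Atl_eq_pos m a A k h1 h2
  · intro hC
    have hT := Tset_nonempty m a A ha_inj ha1 k
    refine ⟨(Tset m a (k : ℕ) (preva m a A (k : ℕ))).min' hT,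
      Atl_eq_neg m a A k hC hT, ?_, ?_, ?_⟩
    · exact (notin_iff m a A k _).1 ((mem_Tset m a _ _ _).1 (Finset.min'_mem _ hT)).1
    · exact ((mem_Tset m a _ _ _).1 (Finset.min'_mem _ hT)).2
    · rintro j' ⟨hj'1, hj'2⟩
      apply Finset.min'_le
      rw [mem_Tset]
      exact ⟨(notin_iff m a A k _).2 hj'1, hj'2⟩
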